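/- Suppose ι is a C^{1,γ}-embedding with constant C. Fix x ∈ ℝⁿ and a direction e ∈ ℝⁿ with ‖e‖ ≤ 1, and let Λ ∈ X* be the functional Λ(f) = (fderiv ℝ f̂ x) e. Then for every real number h ≠ 0, ‖(δ(x + h·e) − δ(x))/h − Λ‖_{X*} ≤ C|h|^γ. Consequently the directional derivative of δ at x in the direction e exists in X* and equals Λ. -/

import Mathlib

/-- `ι : X →ₗ[ℝ] ((Fin n → ℝ) → ℝ)` is a `C^{m,γ}`-embedding with constant `C`:
for every `f : X` the function `f̂ = ι f` is `m`-times continuously differentiable,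
all iterated derivatives up to order `m` are bounded by `C‖f‖`, and the `m`-th
iterated derivative is `γ`-Hölder with constant `C‖f‖`. -/
def IsCmGammaEmbedding {X : Type*} [NormedAddCommGroup X] [NormedSpace ℝ X]
    (n : ℕ) (ι : X →ₗ[ℝ] ((Fin n → ℝ) → ℝ)) (m : ℕ) (γ C : ℝ) : Prop :=
  ∀ f : X,
    ContDiff ℝ m (ι f) ∧
    (∀ i : ℕ, i ≤ m → ∀ x : Fin n → ℝ, ‖iteratedFDeriv ℝ i (ι f) x‖ ≤ C * ‖f‖) ∧
    ∀ x y : Fin n → ℝ,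
      ‖iteratedFDeriv ℝ m (ι f) x - iteratedFDeriv ℝ m (ι f) y‖ ≤ C * ‖f‖ * ‖x - y‖ ^ γ

lemma fderiv_sub_norm_le_iteratedFDeriv_one {n : ℕ} (f : (Fin n → ℝ) → ℝ) (z w : Fin n → ℝ) :
    ‖fderiv ℝ f z - fderiv ℝ f w‖ ≤ ‖iteratedFDeriv ℝ 1 f z - iteratedFDeriv ℝ 1 f w‖ := by
  refine ContinuousLinearMap.opNorm_le_bound _ (norm_nonneg _) (fun v => ?_)
  have : (fderiv ℝ f z - fderiv ℝ f w) v
      = (iteratedFDeriv ℝ 1 f z - iteratedFDeriv ℝ 1 f w) (fun _ => v) := by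
    simp [iteratedFDeriv_one_apply]
  rw [this]
  calc ‖(iteratedFDeriv ℝ 1 f z - iteratedFDeriv ℝ 1 f w) (fun _ => v)‖
      ≤ ‖iteratedFDeriv ℝ 1 f z - iteratedFDeriv ℝ 1 f w‖ * ∏ _i : Fin 1, ‖v‖ :=
        (iteratedFDeriv ℝ 1 f z - iteratedFDeriv ℝ 1 f w).le_opNorm _
    _ = ‖iteratedFDeriv ℝ 1 f z - iteratedFDeriv ℝ 1 f w‖ * ‖v‖ := by simp

/-- If `ι` is a `C^{1,γ}`-embedding with constant `C`, `x ∈ ℝⁿ`, `‖e‖ ≤ 1`, and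
`Λ ∈ X*` is `Λ(f) = (fderiv ℝ f̂ x) e`, then for every `h ≠ 0` the difference
quotient of `δ` satisfies `‖(δ(x + h•e) − δ(x))/h − Λ‖ ≤ C|h|^γ`; consequently the
directional derivative of `δ` at `x` in the direction `e` exists and equals `Λ`. -/
theorem delta_directional_deriv {X : Type*} [NormedAddCommGroup X] [NormedSpace ℝ X]
    [CompleteSpace X]
    {n : ℕ} (hn : 0 < n) {γ C : ℝ} (hγ : 0 < γ) (hγ1 : γ < 1) (hC : 0 ≤ C)
    (ι : X →ₗ[ℝ] ((Fin n → ℝ) → ℝ))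
    (hemb : IsCmGammaEmbedding n ι 1 γ C)
    (δ : (Fin n → ℝ) → (X →L[ℝ] ℝ))
    (hδ : ∀ (x : Fin n → ℝ) (f : X), δ x f = ι f x)
    (x e : Fin n → ℝ) (he : ‖e‖ ≤ 1)
    (Λ : X →L[ℝ] ℝ) (hΛ : ∀ f : X, Λ f = fderiv ℝ (ι f) x e) :
    (∀ h : ℝ, h ≠ 0 → ‖h⁻¹ • (δ (x + h • e) - δ x) - Λ‖ ≤ C * |h| ^ γ) ∧
    HasDerivAt (fun h : ℝ => δ (x + h • e)) Λ 0 := by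
  have key : ∀ h : ℝ, h ≠ 0 → ‖h⁻¹ • (δ (x + h • e) - δ x) - Λ‖ ≤ C * |h| ^ γ := by
    intro h hh
    have hrpow : (0:ℝ) ≤ C * |h| ^ γ :=
      mul_nonneg hC (Real.rpow_nonneg (abs_nonneg h) γ)
    refine ContinuousLinearMap.opNorm_le_bound _ hrpow (fun f => ?_)
    obtain ⟨hdiff, hbd, hhold⟩ := hemb f
    have hdiff' : Differentiable ℝ (ι f) := hdiff.differentiable one_ne_zero
    -- Hölder bound on fderiv along the segment
    have hseg : ∀ z ∈ segment ℝ x (x + h • e),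
        ‖fderiv ℝ (ι f) z - fderiv ℝ (ι f) x‖ ≤ C * ‖f‖ * |h| ^ γ := by
      intro z hz
      have h1 : ‖fderiv ℝ (ι f) z - fderiv ℝ (ι f) x‖ ≤ C * ‖f‖ * ‖z - x‖ ^ γ :=
        (fderiv_sub_norm_le_iteratedFDeriv_one (ι f) z x).trans (hhold z x)
      have hzx : ‖z - x‖ ≤ |h| := by
        obtain ⟨a, b, ha, hb, hab, rfl⟩ := hz
        have : a • x + b • (x + h • e) - x = (b * h) • e := by
          have : a = 1 - b := by linarith
          subst this
          module
        rw [this, norm_smul]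
        calc ‖b * h‖ * ‖e‖ ≤ ‖b * h‖ * 1 := by
              exact mul_le_mul_of_nonneg_left he (norm_nonneg _)
          _ = |b| * |h| := by rw [mul_one, norm_mul]; rfl
          _ ≤ 1 * |h| := by
              apply mul_le_mul_of_nonneg_right _ (abs_nonneg h)
              rw [abs_of_nonneg hb]; linarith
          _ = |h| := one_mul _
      refine h1.trans ?_
      exact mul_le_mul_of_nonneg_left
        (Real.rpow_le_rpow (norm_nonneg _) hzx hγ.le)
        (mul_nonneg hC (norm_nonneg f))
    -- Mean value inequality
    have hmv : ‖ι f (x + h • e) - ι f x - (fderiv ℝ (ι f) x) ((x + h • e) - x)‖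
        ≤ (C * ‖f‖ * |h| ^ γ) * ‖(x + h • e) - x‖ :=
      (convex_segment x (x + h • e)).norm_image_sub_le_of_norm_fderiv_le'
        (fun z _ => hdiff' z) hseg (left_mem_segment ℝ _ _) (right_mem_segment ℝ _ _)
    have hxe : (x + h • e) - x = h • e := by abel
    rw [hxe] at hmv
    have hne : ‖h • e‖ ≤ |h| := by
      rw [norm_smul, Real.norm_eq_abs]
      calc |h| * ‖e‖ ≤ |h| * 1 := mul_le_mul_of_nonneg_left he (abs_nonneg h)
        _ = |h| := mul_one _
    have hmv2 : ‖ι f (x + h • e) - ι f x - h * (fderiv ℝ (ι f) x e)‖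
        ≤ C * ‖f‖ * |h| ^ γ * |h| := by
      have : (fderiv ℝ (ι f) x) (h • e) = h * (fderiv ℝ (ι f) x e) := by
        rw [map_smul]; rfl
      rw [← this]
      refine hmv.trans ?_
      exact mul_le_mul_of_nonneg_left hne
        (mul_nonneg (mul_nonneg hC (norm_nonneg f)) (Real.rpow_nonneg (abs_nonneg h) γ))
    -- Assemble
    have happ : (h⁻¹ • (δ (x + h • e) - δ x) - Λ) f
        = h⁻¹ * (ι f (x + h • e) - ι f x - h * (fderiv ℝ (ι f) x e)) := by
      simp only [ContinuousLinearMap.sub_apply, ContinuousLinearMap.smul_apply,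
        ContinuousLinearMap.sub_apply, hδ, hΛ, smul_eq_mul]
      field_simp
    rw [happ]
    rw [norm_mul, norm_inv, Real.norm_eq_abs]
    calc |h|⁻¹ * ‖ι f (x + h • e) - ι f x - h * (fderiv ℝ (ι f) x e)‖
        ≤ |h|⁻¹ * (C * ‖f‖ * |h| ^ γ * |h|) := by
          exact mul_le_mul_of_nonneg_left hmv2 (inv_nonneg.mpr (abs_nonneg h))
      _ = C * |h| ^ γ * ‖f‖ := by
          field_simp
  refine ⟨key, ?_⟩
  rw [hasDerivAt_iff_tendsto_slope]
  have hδ0 : δ (x + (0:ℝ) • e) = δ x := by rw [zero_smul, add_zero]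
  have hb : Filter.Tendsto (fun h : ℝ => C * |h| ^ γ) (nhdsWithin 0 {(0:ℝ)}ᶜ) (nhds 0) := by
    have h1 : Filter.Tendsto (fun h : ℝ => |h|) (nhdsWithin 0 {(0:ℝ)}ᶜ) (nhds 0) := by
      have := (continuous_abs.tendsto (0:ℝ)).mono_left
        (nhdsWithin_le_nhds (s := {(0:ℝ)}ᶜ))
      simpa using this
    have h2 : ContinuousAt (fun t : ℝ => C * t ^ γ) 0 :=
      (continuousAt_const.mul (Real.continuousAt_rpow_const 0 γ (Or.inr hγ.le)))
    have := h2.tendsto.comp h1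
    simpa [Function.comp_def, Real.zero_rpow hγ.ne'] using this
  rw [tendsto_iff_norm_sub_tendsto_zero]
  apply squeeze_zero' (Filter.Eventually.of_forall fun h => norm_nonneg _) ?_ hb
  filter_upwards [self_mem_nhdsWithin] with h hh
  have hh' : h ≠ 0 := hh
  simpa [slope, hδ0, vsub_eq_sub] using key h hh'
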